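/- Let k be a field, G a finite group, P a normal subgroup of G, and M a semisimple k[G]-module. Then the restriction of M to P is a semisimple k[P]-module. -/

import Mathlib

section CliffordAux

open MonoidAlgebra

variable {k : Type} [Field k] {G : Type} [Group G]
    {P : Subgroup G} [P.Normal]
    {M : Type} [AddCommGroup M] [Module k M]
    (ρ : Representation k G M)

/-- The conjugation ring automorphism of `MonoidAlgebra k P` induced by `g : G`. -/
noncomputable def cliffordConj (k : Type) [Field k] {G : Type} [Group G]
    (P : Subgroup G) [P.Normal] (g : G) :
    MonoidAlgebra k ↥P →+* MonoidAlgebra k ↥P :=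
  (MonoidAlgebra.domCongr k k ((MulAut.conjNormal g : MulAut ↥P) : ↥P ≃* ↥P)).toRingEquiv.toRingHom

lemma cliffordConj_single (g : G) (p : ↥P) (c : k) :
    cliffordConj k P g (MonoidAlgebra.single p c)
      = MonoidAlgebra.single (MulAut.conjNormal g p) c := by
  simp [cliffordConj]

lemma cliffordConj_surjective (g : G) :
    Function.Surjective (cliffordConj k P g) :=
  (MonoidAlgebra.domCongr k k ((MulAut.conjNormal g : MulAut ↥P) : ↥P ≃* ↥P)).surjective

lemma clifford_key (g : G) (r : MonoidAlgebra k ↥P) :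
    (ρ g) ∘ₗ Representation.asAlgebraHom (ρ.comp P.subtype) r
      = Representation.asAlgebraHom (ρ.comp P.subtype) (cliffordConj k P g r) ∘ₗ (ρ g) := by
  induction r using MonoidAlgebra.induction_linear with
  | zero => simp
  | add f h hf hh =>
    rw [map_add, map_add, map_add, LinearMap.add_comp, LinearMap.comp_add, hf, hh]
  | single p c =>
    rw [cliffordConj_single, Representation.asAlgebraHom_single,
      Representation.asAlgebraHom_single]
    ext x
    simp only [LinearMap.comp_apply, LinearMap.smul_apply, map_smul]
    congr 1
    show ρ g (ρ ((P.subtype) p) x) = ρ ((P.subtype) (MulAut.conjNormal g p)) (ρ g x)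
    rw [← Module.End.mul_apply, ← Module.End.mul_apply, ← map_mul, ← map_mul]
    congr 2
    simp [MulAut.conjNormal_apply, mul_assoc]

/-- Action of `g : G` as a semilinear map on the restricted module. -/
noncomputable def cliffordMap (g : G) :
    Representation.asModule (ρ.comp P.subtype) →ₛₗ[cliffordConj k P g]
      Representation.asModule (ρ.comp P.subtype) where
  toFun x := ρ g x
  map_add' x y := map_add (ρ g) x y
  map_smul' r x := LinearMap.congr_fun (clifford_key ρ g r) x

lemma cliffordMap_bijective (g : G) : Function.Bijective (cliffordMap (P := P) ρ g) := by
  refine Function.bijective_iff_has_inverse.mpr ⟨ρ g⁻¹, fun x => ?_, fun x => ?_⟩ <;>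
  · show ρ _ (ρ _ x) = x
    show (ρ _ * ρ _) x = x
    rw [← map_mul]
    simp
    rfl


/-- A `G`-stable `k[P]`-submodule of the restriction, viewed as a `k[G]`-submodule. -/
def gSubmodule (S : Submodule (MonoidAlgebra k ↥P) (Representation.asModule (ρ.comp P.subtype)))
    (hstab : ∀ (g : G), ∀ x ∈ S, ρ g x ∈ S)
    (hk : ∀ (c : k), ∀ x ∈ S, c • x ∈ S) :
    Submodule (MonoidAlgebra k G) ρ.asModule where
  carrier := (SetLike.coe S : Set M)
  add_mem' := fun ha hb => S.add_mem ha hb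
  zero_mem' := S.zero_mem
  smul_mem' := by
    intro r x hx
    induction r using MonoidAlgebra.induction_linear with
    | zero => rw [zero_smul]; exact S.zero_mem
    | add f h hf hh => rw [add_smul]; exact S.add_mem hf hh
    | single g c =>
      have h1 : (MonoidAlgebra.single g c : MonoidAlgebra k G) • x = c • ρ g (x : M) := by
        show ρ.asAlgebraHom (MonoidAlgebra.single g c) x = c • ρ g (x : M)
        rw [Representation.asAlgebraHom_single]; rfl
      rw [h1]
      exact hk c _ (hstab g x hx)

lemma mem_gSubmodule (S : Submodule (MonoidAlgebra k ↥P) (Representation.asModule (ρ.comp P.subtype)))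
    (hstab : ∀ (g : G), ∀ x ∈ S, ρ g x ∈ S)
    (hk : ∀ (c : k), ∀ x ∈ S, c • x ∈ S) (x : M) :
    x ∈ gSubmodule ρ S hstab hk ↔ x ∈ S := Iff.rfl

lemma smul_rho_mem (C : Submodule (MonoidAlgebra k G) ρ.asModule) (g : G) (c : k)
    {x : ρ.asModule} (hx : x ∈ C) : c • ρ g x ∈ C := by
  have h2 : c • ρ g x = (MonoidAlgebra.single g c : MonoidAlgebra k G) • x := by
    show _ = ρ.asAlgebraHom (MonoidAlgebra.single g c) x
    rw [Representation.asAlgebraHom_single]; rfl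
  rw [h2]
  exact C.smul_mem _ hx

/-- A `k[G]`-submodule viewed as a `k[P]`-submodule of the restriction. -/
def pSubmodule (C : Submodule (MonoidAlgebra k G) ρ.asModule) :
    Submodule (MonoidAlgebra k ↥P) (Representation.asModule (ρ.comp P.subtype)) where
  carrier := (SetLike.coe C : Set M)
  add_mem' := fun ha hb => C.add_mem ha hb
  zero_mem' := C.zero_mem
  smul_mem' := by
    intro r x hx
    induction r using MonoidAlgebra.induction_linear with
    | zero => rw [zero_smul]; exact C.zero_mem
    | add f h hf hh => rw [add_smul]; exact C.add_mem hf hh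
    | single p c =>
      have h1 : (MonoidAlgebra.single p c : MonoidAlgebra k ↥P) • x = c • ρ (↑p : G) (x : M) := by
        show Representation.asAlgebraHom (ρ.comp P.subtype) (MonoidAlgebra.single p c) x
          = c • ρ (↑p : G) (x : M)
        rw [Representation.asAlgebraHom_single]; rfl
      rw [h1]
      exact smul_rho_mem ρ C (↑p : G) c hx

lemma mem_pSubmodule (C : Submodule (MonoidAlgebra k G) ρ.asModule) (x : M) :
    x ∈ pSubmodule (P := P) ρ C ↔ x ∈ C := Iff.rfl

end CliffordAux

/-- **Clifford's theorem.** If `k` is a field, `G` a finite group, `P` a normal subgroup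
of `G`, and `M` a semisimple `k[G]`-module (given by a representation `ρ` of `G` on `M`),
then the restriction of `M` to `P` is a semisimple `k[P]`-module. -/
theorem clifford_semisimple_restriction
    (k : Type) [Field k] (G : Type) [Group G] [Finite G]
    (P : Subgroup G) [P.Normal]
    (M : Type) [AddCommGroup M] [Module k M] [Module.Finite k M]
    (ρ : Representation k G M)
    (hss : IsSemisimpleModule (MonoidAlgebra k G) ρ.asModule) :
    IsSemisimpleModule (MonoidAlgebra k P) (Representation.asModule (ρ.comp P.subtype)) := by
  classical
  -- scalar tower for the restricted module
  haveI hTower : IsScalarTower k (MonoidAlgebra k ↥P)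
      (Representation.asModule (ρ.comp P.subtype)) :=
    IsScalarTower.of_algebraMap_smul (fun c x => by
      show Representation.asAlgebraHom (ρ.comp P.subtype)
        (algebraMap k (MonoidAlgebra k ↥P) c) x = c • x
      rw [AlgHom.commutes]
      rfl)
  haveI hArt_k : IsArtinian k (Representation.asModule (ρ.comp P.subtype)) := by
    have : IsArtinian k M := inferInstance
    exact this
  haveI hArt : IsArtinian (MonoidAlgebra k ↥P)
      (Representation.asModule (ρ.comp P.subtype)) := isArtinian_of_tower k hArt_k
  haveI hAtomic : IsAtomic (Submodule (MonoidAlgebra k ↥P)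
      (Representation.asModule (ρ.comp P.subtype))) :=
    isAtomic_of_orderBot_wellFounded_lt IsWellFounded.wf
  -- the socle of the restricted module
  have hstab : ∀ (g : G), ∀ x ∈ sSup {A : Submodule (MonoidAlgebra k ↥P)
      (Representation.asModule (ρ.comp P.subtype)) | IsAtom A},
      ρ g x ∈ sSup {A : Submodule (MonoidAlgebra k ↥P)
        (Representation.asModule (ρ.comp P.subtype)) | IsAtom A} := by
    intro g x hx
    haveI : RingHomSurjective (cliffordConj k P g) := ⟨cliffordConj_surjective g⟩
    have hmap : Submodule.orderIsoMapComapOfBijective (cliffordMap (P := P) ρ g)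
        (cliffordMap_bijective ρ g) (sSup {A | IsAtom A}) ≤ sSup {A | IsAtom A} := by
      rw [OrderIso.map_sSup]
      refine iSup₂_le ?_
      intro A hA
      exact le_sSup ((OrderIso.isAtom_iff _ A).mpr hA)
    exact hmap (Submodule.mem_map_of_mem hx)
  have hk : ∀ (c : k), ∀ x ∈ sSup {A : Submodule (MonoidAlgebra k ↥P)
      (Representation.asModule (ρ.comp P.subtype)) | IsAtom A},
      c • x ∈ sSup {A : Submodule (MonoidAlgebra k ↥P)
        (Representation.asModule (ρ.comp P.subtype)) | IsAtom A} := by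
    intro c x hx
    rw [← algebraMap_smul (MonoidAlgebra k ↥P) c x]
    exact Submodule.smul_mem _ _ hx
  obtain ⟨C', hC'⟩ := exists_isCompl (gSubmodule ρ _ hstab hk)
  have hCbot : pSubmodule (P := P) ρ C' = ⊥ := by
    by_contra h
    obtain ⟨A, hA, hAC⟩ := (IsAtomic.eq_bot_or_exists_atom_le (pSubmodule (P := P) ρ C')).resolve_left h
    have hAS : A ≤ sSup {A | IsAtom A} := le_sSup hA
    have : A = ⊥ := by
      rw [Submodule.eq_bot_iff]
      intro x hxA
      have hx1 : x ∈ gSubmodule ρ _ hstab hk := (mem_gSubmodule ρ _ hstab hk x).mpr (hAS hxA)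
      have hx2 : x ∈ C' := (mem_pSubmodule (P := P) ρ C' x).mp (hAC hxA)
      exact (Submodule.disjoint_def.mp hC'.disjoint) x hx1 hx2
    exact hA.1 this
  have hC'bot : C' = ⊥ := by
    rw [Submodule.eq_bot_iff]
    intro x hx
    have : x ∈ pSubmodule (P := P) ρ C' := (mem_pSubmodule (P := P) ρ C' x).mpr hx
    rw [hCbot] at this
    exact (Submodule.mem_bot (MonoidAlgebra k ↥P) (M := Representation.asModule (ρ.comp P.subtype))).mp this
  have hS'top : gSubmodule ρ _ hstab hk = ⊤ := by
    have := hC'.sup_eq_top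
    rwa [hC'bot, sup_bot_eq] at this
  have hStop : sSup {A : Submodule (MonoidAlgebra k ↥P)
      (Representation.asModule (ρ.comp P.subtype)) | IsAtom A} = ⊤ := by
    rw [Submodule.eq_top_iff']
    intro x
    have hx : (show ρ.asModule from x) ∈ gSubmodule ρ (sSup {A : Submodule (MonoidAlgebra k ↥P)
        (Representation.asModule (ρ.comp P.subtype)) | IsAtom A}) hstab hk := by
      rw [hS'top]; exact Submodule.mem_top
    exact (mem_gSubmodule ρ _ hstab hk x).mp hx
  refine IsSemisimpleModule.of_sSup_simples_eq_top ?_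
  have heq : {m : Submodule (MonoidAlgebra k ↥P)
      (Representation.asModule (ρ.comp P.subtype)) | IsSimpleModule (MonoidAlgebra k ↥P) m}
      = {A : Submodule (MonoidAlgebra k ↥P)
        (Representation.asModule (ρ.comp P.subtype)) | IsAtom A} := by
    ext A
    exact isSimpleModule_iff_isAtom
  rw [heq, hStop]
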